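/- Let N ≥ 2 and let x ∈ ℂ^N be nonzero with x[n] ≠ 0 for every n = 2,…,N−1. Then there exist real numbers γ_{m,n} (m = 1,…,4; n = 1,…,N−1) such that the Hermitian matrix Y = Σ_{n=1}^{N−1} Σ_{m=1}^{4} γ_{m,n} · φ_{m,n} φ_{m,n}* satisfies Y x = 0 and ⟨Y u, u⟩ > 0 for every nonzero u ∈ ℂ^N with ⟨u, x⟩ = 0. (Existence of a dual certificate in the range of A_Φ* for signals in S_Φ.) -/
import Mathlib


open Complex Matrix MeasureTheory

noncomputable section

/-- α = √((1 − 1/√3)/2) -/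
def alph : ℂ := (Real.sqrt ((1 - 1/Real.sqrt 3)/2) : ℝ)

/-- β = e^{i5π/4}·√((1 + 1/√3)/2) -/
def beta : ℂ := Complex.exp (Complex.I * (5 * (Real.pi : ℂ) / 4)) *
  (Real.sqrt ((1 + 1/Real.sqrt 3)/2) : ℝ)

/-- the four frame vectors a₁ = (α,β), a₂ = (β,α), a₃ = (α,−β), a₄ = (−β,α) in ℂ² -/
def coef : Fin 4 → Fin 2 → ℂ := ![![alph, beta], ![beta, alph], ![alph, -beta], ![-beta, alph]]

/-- inner product ⟨x,y⟩ = Σ x[n]·conj(y[n]) -/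
def inn {N : ℕ} (x y : Fin N → ℂ) : ℂ := ∑ i, x i * (starRingEnd ℂ) (y i)

/-- Euclidean norm ‖x‖ = √⟨x,x⟩ -/
def nrm {N : ℕ} (x : Fin N → ℂ) : ℝ := Real.sqrt (inn x x).re

/-- outer product x y* -/
def outer {N : ℕ} (x y : Fin N → ℂ) : Matrix (Fin N) (Fin N) ℂ :=
  fun i j => x i * (starRingEnd ℂ) (y j)

/-- measurement vectors φ_{m,n} (0-based n: nonzero entries at positions n and n+1) -/
def phiv (N : ℕ) (m : Fin 4) (n : ℕ) : Fin N → ℂ :=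
  fun i => if (i : ℕ) = n then coef m 0 else if (i : ℕ) = n + 1 then coef m 1 else 0

/-- measurement vectors ψ_{m,n} (0-based n: nonzero entries at positions 0 and n+1) -/
def psiv (N : ℕ) (m : Fin 4) (n : ℕ) : Fin N → ℂ :=
  fun i => if (i : ℕ) = 0 then coef m 0 else if (i : ℕ) = n + 1 then coef m 1 else 0

/-- Hilbert–Schmidt inner product ⟨X,Y⟩ = trace(Y*X) -/
def hs {N : ℕ} (X Y : Matrix (Fin N) (Fin N) ℂ) : ℂ := Matrix.trace (Yᴴ * X)

/-- Frobenius (Hilbert–Schmidt) norm -/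
def frob {N : ℕ} (X : Matrix (Fin N) (Fin N) ℂ) : ℝ := Real.sqrt (Matrix.trace (Xᴴ * X)).re

/-- spectral norm (largest singular value) -/
def specNorm {N : ℕ} (A : Matrix (Fin N) (Fin N) ℂ) : ℝ :=
  sSup {r : ℝ | ∃ v : Fin N → ℂ, nrm v ≤ 1 ∧ r = nrm (A.mulVec v)}
lemma sqrt3_one_le : (1:ℝ) ≤ Real.sqrt 3 := by
  rw [show (1:ℝ) = Real.sqrt 1 by simp]; exact Real.sqrt_le_sqrt (by norm_num)
lemma sqrt3_sq : Real.sqrt 3 * Real.sqrt 3 = 3 := Real.mul_self_sqrt (by norm_num)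
lemma hA0 : (0:ℝ) ≤ (1 - 1/Real.sqrt 3)/2 := by
  have h := sqrt3_one_le
  have : 1/Real.sqrt 3 ≤ 1 := by
    rw [div_le_one (by linarith)]; linarith
  linarith
lemma hB0 : (0:ℝ) ≤ (1 + 1/Real.sqrt 3)/2 := by
  have h := sqrt3_one_le
  have : 0 ≤ 1/Real.sqrt 3 := by positivity
  linarith

lemma conj_alph : (starRingEnd ℂ) alph = alph := by simp [alph]
lemma alph_mul_conj : alph * (starRingEnd ℂ) alph = (((1 - 1/Real.sqrt 3)/2 : ℝ) : ℂ) := by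
  rw [conj_alph, alph, ← Complex.ofReal_mul, Real.mul_self_sqrt hA0]
lemma beta_mul_conj : beta * (starRingEnd ℂ) beta = (((1 + 1/Real.sqrt 3)/2 : ℝ) : ℂ) := by
  rw [beta]
  rw [_root_.map_mul, Complex.conj_ofReal, ← Complex.exp_conj]
  have h1 : (starRingEnd ℂ) (Complex.I * (5 * (Real.pi : ℂ) / 4)) =
      -(Complex.I * (5 * (Real.pi : ℂ) / 4)) := by
    rw [_root_.map_mul, Complex.conj_I]
    rw [show (5 * (Real.pi : ℂ) / 4) = (((5 * Real.pi / 4 : ℝ)) : ℂ) by push_cast; ring]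
    rw [Complex.conj_ofReal]; ring
  rw [h1]
  have h2 : Complex.exp (Complex.I * (5 * (Real.pi : ℂ) / 4)) *
      Complex.exp (-(Complex.I * (5 * (Real.pi : ℂ) / 4))) = 1 := by
    rw [← Complex.exp_add]; simp
  calc Complex.exp (Complex.I * (5 * (Real.pi : ℂ) / 4)) *
        ((Real.sqrt ((1 + 1/Real.sqrt 3)/2) : ℝ):ℂ) *
        (Complex.exp (-(Complex.I * (5 * (Real.pi : ℂ) / 4))) *
        ((Real.sqrt ((1 + 1/Real.sqrt 3)/2) : ℝ):ℂ))
      = (Complex.exp (Complex.I * (5 * (Real.pi : ℂ) / 4)) *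
        Complex.exp (-(Complex.I * (5 * (Real.pi : ℂ) / 4)))) *
        (((Real.sqrt ((1 + 1/Real.sqrt 3)/2) : ℝ):ℂ) *
         ((Real.sqrt ((1 + 1/Real.sqrt 3)/2) : ℝ):ℂ)) := by ring
    _ = (((1 + 1/Real.sqrt 3)/2 : ℝ) : ℂ) := by
        rw [h2, one_mul, ← Complex.ofReal_mul, Real.mul_self_sqrt hB0]

lemma expE : Complex.exp (Complex.I * (5 * (Real.pi : ℂ) / 4)) =
    ((-(Real.sqrt 2/2) : ℝ) : ℂ) + ((-(Real.sqrt 2/2) : ℝ):ℂ) * Complex.I := by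
  have h : Complex.I * (5 * (Real.pi:ℂ)/4) = ((Real.pi/4 + Real.pi : ℝ):ℂ) * Complex.I := by
    push_cast; ring
  rw [h, Complex.exp_mul_I, ← Complex.ofReal_cos, ← Complex.ofReal_sin,
    Real.cos_add_pi, Real.sin_add_pi, Real.cos_pi_div_four, Real.sin_pi_div_four]

lemma sqrt_eq_of_sq {a b : ℝ} (hb : 0 ≤ b) (h : b * b = a) : Real.sqrt a = b := by
  rw [← h, Real.sqrt_mul_self hb]

lemma kval : Real.sqrt ((1-1/Real.sqrt 3)/2) * Real.sqrt ((1+1/Real.sqrt 3)/2)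
    * (Real.sqrt 2/2) = Real.sqrt 3 / 6 := by
  have hne : Real.sqrt 3 ≠ 0 := by positivity
  have h3 := sqrt3_sq
  have h1 : Real.sqrt ((1-1/Real.sqrt 3)/2) * Real.sqrt ((1+1/Real.sqrt 3)/2)
      = Real.sqrt (1/6) := by
    rw [← Real.sqrt_mul hA0]
    congr 1
    field_simp
    ring_nf
    nlinarith [h3]
  have h2 : Real.sqrt (1/6) * Real.sqrt 2 = Real.sqrt (1/3) := by
    rw [← Real.sqrt_mul (by norm_num)]; norm_num
  have h4 : Real.sqrt (1/3) = Real.sqrt 3 / 3 :=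
    sqrt_eq_of_sq (by positivity) (by nlinarith [h3])
  calc Real.sqrt ((1-1/Real.sqrt 3)/2) * Real.sqrt ((1+1/Real.sqrt 3)/2) * (Real.sqrt 2/2)
      = (Real.sqrt ((1-1/Real.sqrt 3)/2) * Real.sqrt ((1+1/Real.sqrt 3)/2) * Real.sqrt 2)/2 := by
        ring
    _ = (Real.sqrt (1/6) * Real.sqrt 2)/2 := by rw [h1]
    _ = Real.sqrt (1/3)/2 := by rw [h2]
    _ = Real.sqrt 3/6 := by rw [h4]; ring

lemma alph_conj_beta : alph * (starRingEnd ℂ) beta =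
    ((Real.sqrt 3/6 : ℝ) : ℂ) * (-1 + Complex.I) := by
  have hconjE : (starRingEnd ℂ) (Complex.exp (Complex.I * (5 * (Real.pi : ℂ) / 4))) =
      ((-(Real.sqrt 2/2) : ℝ):ℂ) - ((-(Real.sqrt 2/2) : ℝ):ℂ) * Complex.I := by
    rw [expE, map_add, _root_.map_mul, Complex.conj_ofReal, Complex.conj_I]
    ring
  rw [beta, _root_.map_mul, Complex.conj_ofReal, hconjE, alph, ← kval]
  push_cast
  ring

lemma alph_beta : alph * beta = ((Real.sqrt 3/6 : ℝ) : ℂ) * (-1 - Complex.I) := by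
  have h := congrArg (starRingEnd ℂ) alph_conj_beta
  rw [_root_.map_mul, conj_alph, Complex.conj_conj, _root_.map_mul, Complex.conj_ofReal,
    map_add, Complex.conj_I, map_neg, _root_.map_one] at h
  rw [h]; ring

/-- coefficients expressing a Hermitian 2×2 block [[P,z],[z̄,Q]] in the frame -/
def gam3 (P Q : ℝ) (z : ℂ) : Fin 4 → ℝ :=
  ![ ((P+Q - Real.sqrt 3*(P-Q))/2 + Real.sqrt 3*(z.im - z.re))/2,
     ((P+Q + Real.sqrt 3*(P-Q))/2 + Real.sqrt 3*(-z.im - z.re))/2,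
     ((P+Q - Real.sqrt 3*(P-Q))/2 - Real.sqrt 3*(z.im - z.re))/2,
     ((P+Q + Real.sqrt 3*(P-Q))/2 - Real.sqrt 3*(-z.im - z.re))/2 ]

lemma pAA : alph * (starRingEnd ℂ) alph = (((1 - 1/Real.sqrt 3)/2 : ℝ) : ℂ) := alph_mul_conj
lemma pBB : beta * (starRingEnd ℂ) beta = (((1 + 1/Real.sqrt 3)/2 : ℝ) : ℂ) := beta_mul_conj
lemma pAB : alph * (starRingEnd ℂ) beta = ((Real.sqrt 3/6 : ℝ) : ℂ) * (-1 + Complex.I) :=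
  alph_conj_beta
lemma pBA : beta * (starRingEnd ℂ) alph = ((Real.sqrt 3/6 : ℝ) : ℂ) * (-1 - Complex.I) := by
  rw [conj_alph, mul_comm, alph_beta]

lemma sqrt3C : ((Real.sqrt 3 : ℝ) : ℂ) * ((Real.sqrt 3 : ℝ) : ℂ) = 3 := by
  rw [← Complex.ofReal_mul, sqrt3_sq]; norm_num
lemma sqrt3Cinv : ((Real.sqrt 3 : ℝ) : ℂ) * ((Real.sqrt 3 : ℝ) : ℂ)⁻¹ = 1 := by
  apply mul_inv_cancel₀
  simp only [ne_eq, Complex.ofReal_eq_zero]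
  positivity

lemma block00 (P Q : ℝ) (z : ℂ) :
    (∑ m : Fin 4, ((gam3 P Q z m : ℝ) : ℂ) * (coef m 0 * (starRingEnd ℂ) (coef m 0)))
      = (P : ℂ) := by
  simp only [Fin.sum_univ_four, coef, Matrix.cons_val_zero, Matrix.cons_val_one,
    Matrix.cons_val_two, Matrix.cons_val_three, Matrix.tail_cons,
    Matrix.head_cons, gam3, map_neg, mul_neg, neg_mul, neg_neg]
  simp only [pAA, pBB, pAB, pBA]
  push_cast
  linear_combination (((P:ℂ) - Q)/2) * sqrt3Cinv

lemma block11 (P Q : ℝ) (z : ℂ) :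
    (∑ m : Fin 4, ((gam3 P Q z m : ℝ) : ℂ) * (coef m 1 * (starRingEnd ℂ) (coef m 1)))
      = (Q : ℂ) := by
  simp only [Fin.sum_univ_four, coef, Matrix.cons_val_zero, Matrix.cons_val_one,
    Matrix.cons_val_two, Matrix.cons_val_three, Matrix.tail_cons,
    Matrix.head_cons, gam3, map_neg, mul_neg, neg_mul, neg_neg]
  simp only [pAA, pBB, pAB, pBA]
  push_cast
  linear_combination (-(((P:ℂ) - Q)/2)) * sqrt3Cinv

lemma block01 (P Q : ℝ) (z : ℂ) :
    (∑ m : Fin 4, ((gam3 P Q z m : ℝ) : ℂ) * (coef m 0 * (starRingEnd ℂ) (coef m 1)))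
      = z := by
  simp only [Fin.sum_univ_four, coef, Matrix.cons_val_zero, Matrix.cons_val_one,
    Matrix.cons_val_two, Matrix.cons_val_three, Matrix.tail_cons,
    Matrix.head_cons, gam3, map_neg, mul_neg, neg_mul, neg_neg]
  simp only [pAA, pBB, pAB, pBA]
  push_cast
  linear_combination (((z.re:ℂ) + (z.im:ℂ)*Complex.I)/3) * sqrt3C + Complex.re_add_im z

lemma block10 (P Q : ℝ) (z : ℂ) :
    (∑ m : Fin 4, ((gam3 P Q z m : ℝ) : ℂ) * (coef m 1 * (starRingEnd ℂ) (coef m 0)))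
      = (starRingEnd ℂ) z := by
  have hz : (starRingEnd ℂ) z = (z.re : ℂ) - (z.im : ℂ) * Complex.I := by
    apply Complex.ext <;> simp
  simp only [Fin.sum_univ_four, coef, Matrix.cons_val_zero, Matrix.cons_val_one,
    Matrix.cons_val_two, Matrix.cons_val_three, Matrix.tail_cons,
    Matrix.head_cons, gam3, map_neg, mul_neg, neg_mul, neg_neg, hz]
  simp only [pAA, pBB, pAB, pBA]
  push_cast
  linear_combination (((z.re:ℂ) - (z.im:ℂ)*Complex.I)/3) * sqrt3C

lemma outer_decomp (N n : ℕ) (p q : ℂ) :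
    (∑ m : Fin 4, ((gam3 (Complex.normSq p) (Complex.normSq q)
        (p * (starRingEnd ℂ) q) m : ℝ) : ℂ) • outer (phiv N m n) (phiv N m n))
    = outer (fun i : Fin N => if (i:ℕ) = n then p else if (i:ℕ) = n+1 then q else 0)
            (fun i : Fin N => if (i:ℕ) = n then p else if (i:ℕ) = n+1 then q else 0) := by
  ext i j
  simp only [Matrix.sum_apply, Matrix.smul_apply, outer, smul_eq_mul]
  by_cases hi : (i:ℕ) = n
  · have e1 : ∀ m : Fin 4, phiv N m n i = coef m 0 := fun m => by simp [phiv, hi]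
    by_cases hj : (j:ℕ) = n
    · have e2 : ∀ m : Fin 4, phiv N m n j = coef m 0 := fun m => by simp [phiv, hj]
      simp only [e1, e2]
      rw [if_pos hi, if_pos hj, block00 (Complex.normSq p) (Complex.normSq q)
        (p * (starRingEnd ℂ) q), ← Complex.mul_conj]
    · by_cases hj1 : (j:ℕ) = n+1
      · have e2 : ∀ m : Fin 4, phiv N m n j = coef m 1 := fun m => by simp [phiv, hj, hj1]
        simp only [e1, e2]
        rw [if_pos hi, if_neg hj, if_pos hj1]
        exact block01 (Complex.normSq p) (Complex.normSq q) (p * (starRingEnd ℂ) q)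
      · have e2 : ∀ m : Fin 4, phiv N m n j = 0 := fun m => by simp [phiv, hj, hj1]
        simp only [e2]
        rw [if_neg hj, if_neg hj1]
        simp
  · by_cases hi1 : (i:ℕ) = n+1
    · have e1 : ∀ m : Fin 4, phiv N m n i = coef m 1 := fun m => by simp [phiv, hi, hi1]
      by_cases hj : (j:ℕ) = n
      · have e2 : ∀ m : Fin 4, phiv N m n j = coef m 0 := fun m => by simp [phiv, hj]
        simp only [e1, e2]
        rw [if_neg hi, if_pos hi1, if_pos hj, block10 (Complex.normSq p) (Complex.normSq q)
          (p * (starRingEnd ℂ) q), _root_.map_mul, Complex.conj_conj]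
        ring
      · by_cases hj1 : (j:ℕ) = n+1
        · have e2 : ∀ m : Fin 4, phiv N m n j = coef m 1 := fun m => by simp [phiv, hj, hj1]
          simp only [e1, e2]
          rw [if_neg hi, if_pos hi1, if_neg hj, if_pos hj1, block11 (Complex.normSq p)
            (Complex.normSq q) (p * (starRingEnd ℂ) q), ← Complex.mul_conj]
        · have e2 : ∀ m : Fin 4, phiv N m n j = 0 := fun m => by simp [phiv, hj, hj1]
          simp only [e2]
          rw [if_neg hj, if_neg hj1]
          simp
    · have e1 : ∀ m : Fin 4, phiv N m n i = 0 := fun m => by simp [phiv, hi, hi1]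
      simp only [e1]
      rw [if_neg hi, if_neg hi1]
      simp

lemma inn_two (N n : ℕ) (hn : n + 1 < N) (u : Fin N → ℂ) (p q : ℂ) :
    inn u (fun i : Fin N => if (i:ℕ) = n then p else if (i:ℕ) = n+1 then q else 0)
      = u ⟨n, by omega⟩ * (starRingEnd ℂ) p + u ⟨n+1, hn⟩ * (starRingEnd ℂ) q := by
  unfold inn
  have key : ∀ i : Fin N,
      u i * (starRingEnd ℂ) (if (i:ℕ) = n then p else if (i:ℕ) = n+1 then q else 0)
      = (if i = (⟨n, by omega⟩ : Fin N) then u i * (starRingEnd ℂ) p else 0)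
        + (if i = (⟨n+1, hn⟩ : Fin N) then u i * (starRingEnd ℂ) q else 0) := by
    intro i
    by_cases h1 : (i:ℕ) = n
    · have hi : i = (⟨n, by omega⟩ : Fin N) := Fin.ext h1
      have hne : i ≠ (⟨n+1, hn⟩ : Fin N) := by
        intro h; have h' := congrArg Fin.val h; simp only [] at h'; omega
      rw [if_pos h1, if_pos hi, if_neg hne]; ring
    · by_cases h2 : (i:ℕ) = n+1
      · have hi : i = (⟨n+1, hn⟩ : Fin N) := Fin.ext h2
        have hne : i ≠ (⟨n, by omega⟩ : Fin N) := by
          intro h; have h' := congrArg Fin.val h; simp only [] at h'; omega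
        rw [if_neg h1, if_pos h2, if_pos hi, if_neg hne]; ring
      · have hne1 : i ≠ (⟨n, by omega⟩ : Fin N) := fun h => h1 (by rw [h])
        have hne2 : i ≠ (⟨n+1, hn⟩ : Fin N) := fun h => h2 (by rw [h])
        rw [if_neg h1, if_neg h2, if_neg hne1, if_neg hne2, map_zero, mul_zero,
          add_zero]
  rw [Finset.sum_congr rfl (fun i _ => key i), Finset.sum_add_distrib,
    Finset.sum_ite_eq' Finset.univ, Finset.sum_ite_eq' Finset.univ]
  simp

/-- extension of a vector to ℕ-indexing -/
def Xe {N : ℕ} (x : Fin N → ℂ) : ℕ → ℂ := fun k => if h : k < N then x ⟨k, h⟩ else 0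

/-- the kernel vectors v_n = conj(x_{n+1}) e_n − conj(x_n) e_{n+1} -/
def vvv {N : ℕ} (x : Fin N → ℂ) (n : ℕ) : Fin N → ℂ :=
  fun i => if (i:ℕ) = n then (starRingEnd ℂ) (Xe x (n+1))
           else if (i:ℕ) = n+1 then -((starRingEnd ℂ) (Xe x n)) else 0

/-- the dual-certificate coefficients -/
def ggam {N : ℕ} (x : Fin N → ℂ) : Fin 4 → ℕ → ℝ := fun m n =>
  gam3 (Complex.normSq ((starRingEnd ℂ) (Xe x (n+1))))
    (Complex.normSq (-((starRingEnd ℂ) (Xe x n))))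
    ((starRingEnd ℂ) (Xe x (n+1)) * (starRingEnd ℂ) (-((starRingEnd ℂ) (Xe x n)))) m

lemma vv_decomp {N : ℕ} (x : Fin N → ℂ) (n : ℕ) :
    (∑ m : Fin 4, ((ggam x m n : ℝ) : ℂ) • outer (phiv N m n) (phiv N m n))
      = outer (vvv x n) (vvv x n) :=
  outer_decomp N n ((starRingEnd ℂ) (Xe x (n+1))) (-((starRingEnd ℂ) (Xe x n)))

lemma mulVec_outer_sum {N : ℕ} (v : ℕ → Fin N → ℂ) (s : Finset ℕ) (w : Fin N → ℂ)
    (i : Fin N) :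
    ((∑ n ∈ s, outer (v n) (v n)).mulVec w) i = ∑ n ∈ s, inn w (v n) * v n i := by
  simp only [Matrix.mulVec, dotProduct, Matrix.sum_apply, outer, inn]
  simp only [Finset.sum_mul]
  rw [Finset.sum_comm]
  refine Finset.sum_congr rfl fun n _ => ?_
  exact Finset.sum_congr rfl fun j _ => by ring

lemma inn_vvv {N : ℕ} (x : Fin N → ℂ) (n : ℕ) (hn : n + 1 < N) (w : Fin N → ℂ) :
    inn w (vvv x n) = w ⟨n, by omega⟩ * Xe x (n+1) - w ⟨n+1, hn⟩ * Xe x n := by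
  unfold vvv
  rw [inn_two N n hn]
  simp only [map_neg, Complex.conj_conj]
  ring

lemma inn_sum_outer {N : ℕ} (v : ℕ → Fin N → ℂ) (s : Finset ℕ) (u : Fin N → ℂ) :
    inn ((∑ n ∈ s, outer (v n) (v n)).mulVec u) u
      = (((∑ n ∈ s, Complex.normSq (inn u (v n))) : ℝ) : ℂ) := by
  have h1 : (∑ n ∈ s, outer (v n) (v n)).mulVec u = fun i => ∑ n ∈ s, inn u (v n) * v n i :=
    funext (mulVec_outer_sum v s u)
  rw [h1]
  show (∑ i : Fin N, (∑ n ∈ s, inn u (v n) * v n i) * (starRingEnd ℂ) (u i)) = _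
  have h2 : ∀ i : Fin N, (∑ n ∈ s, inn u (v n) * v n i) * (starRingEnd ℂ) (u i)
      = ∑ n ∈ s, inn u (v n) * (v n i * (starRingEnd ℂ) (u i)) := by
    intro i; rw [Finset.sum_mul]; exact Finset.sum_congr rfl fun n _ => by ring
  rw [Finset.sum_congr rfl fun i _ => h2 i, Finset.sum_comm]
  have h4 : ∀ n, (∑ i : Fin N, inn u (v n) * (v n i * (starRingEnd ℂ) (u i)))
      = (Complex.normSq (inn u (v n)) : ℂ) := by
    intro n
    rw [← Finset.mul_sum]
    have h5 : (∑ i : Fin N, v n i * (starRingEnd ℂ) (u i))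
        = (starRingEnd ℂ) (inn u (v n)) := by
      unfold inn
      rw [map_sum]
      exact Finset.sum_congr rfl fun i _ => by
        rw [_root_.map_mul, Complex.conj_conj]; ring
    rw [h5, Complex.mul_conj]
  rw [Finset.sum_congr rfl fun n _ => h4 n]
  push_cast
  rfl

theorem main_thm (N : ℕ) (hN : 2 ≤ N) (x : Fin N → ℂ) (hx0 : x ≠ 0)
    (hx : ∀ i : Fin N, 0 < (i : ℕ) → (i : ℕ) < N - 1 → x i ≠ 0) :
    ∃ γ : Fin 4 → ℕ → ℝ,
      ((∑ n ∈ Finset.range (N - 1), ∑ m : Fin 4,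
          (γ m n : ℂ) • outer (phiv N m n) (phiv N m n)).mulVec x = 0) ∧
      (∀ u : Fin N → ℂ, u ≠ 0 → inn u x = 0 →
        0 < (inn ((∑ n ∈ Finset.range (N - 1), ∑ m : Fin 4,
          (γ m n : ℂ) • outer (phiv N m n) (phiv N m n)).mulVec u) u).re) := by
  classical
  have hsum : (∑ n ∈ Finset.range (N - 1), ∑ m : Fin 4,
      ((ggam x m n : ℝ) : ℂ) • outer (phiv N m n) (phiv N m n))
      = ∑ n ∈ Finset.range (N - 1), outer (vvv x n) (vvv x n) :=
    Finset.sum_congr rfl fun n _ => vv_decomp x n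
  refine ⟨ggam x, ?_, ?_⟩
  · -- Y x = 0
    rw [hsum]
    funext i
    rw [mulVec_outer_sum]
    simp only [Pi.zero_apply]
    apply Finset.sum_eq_zero
    intro n hn
    rw [Finset.mem_range] at hn
    have hn1 : n + 1 < N := by omega
    have hnN : n < N := by omega
    rw [inn_vvv x n hn1 x]
    have e1 : x ⟨n, by omega⟩ = Xe x n := by simp [Xe, hnN]
    have e2 : x ⟨n+1, hn1⟩ = Xe x (n+1) := by simp [Xe, hn1]
    rw [e1, e2]
    ring
  · -- positivity on the complement
    intro u hu hux
    rw [hsum]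
    have hre : (inn ((∑ n ∈ Finset.range (N-1), outer (vvv x n) (vvv x n)).mulVec u) u).re
        = ∑ n ∈ Finset.range (N-1), Complex.normSq (inn u (vvv x n)) := by
      rw [inn_sum_outer, Complex.ofReal_re]
    rw [hre]
    by_contra hle
    push_neg at hle
    have hnonneg : ∀ k ∈ Finset.range (N-1), 0 ≤ Complex.normSq (inn u (vvv x k)) :=
      fun k _ => Complex.normSq_nonneg _
    have hz : ∀ n ∈ Finset.range (N-1), inn u (vvv x n) = 0 := by
      intro n hn
      have h0 := (Finset.sum_eq_zero_iff_of_nonneg hnonneg).mp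
        (le_antisymm hle (Finset.sum_nonneg hnonneg)) n hn
      exact Complex.normSq_eq_zero.mp h0
    have hrel : ∀ n, n < N - 1 → Xe u n * Xe x (n+1) = Xe u (n+1) * Xe x n := by
      intro n hn
      have hn1 : n+1 < N := by omega
      have hnN : n < N := by omega
      have h0 := hz n (Finset.mem_range.mpr hn)
      rw [inn_vvv x n hn1 u] at h0
      have e1 : u ⟨n, by omega⟩ = Xe u n := by simp [Xe, hnN]
      have e2 : u ⟨n+1, hn1⟩ = Xe u (n+1) := by simp [Xe, hn1]
      rw [e1, e2] at h0
      exact sub_eq_zero.mp h0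
    have hXne : ∀ k, 0 < k → k < N - 1 → Xe x k ≠ 0 := by
      intro k hk1 hk2
      have hkN : k < N := by omega
      have e : Xe x k = x ⟨k, hkN⟩ := by simp [Xe, hkN]
      rw [e]
      exact hx ⟨k, hkN⟩ hk1 hk2
    have hstep : ∀ d, 1 ≤ d → ∀ i, i + d < N → Xe u i * Xe x (i+d) = Xe u (i+d) * Xe x i := by
      intro d hd
      induction d, hd using Nat.le_induction with
      | base => intro i hi; exact hrel i (by omega)
      | succ d hd ih =>
        intro i hi
        have h1 := ih i (by omega)
        have h2 := hrel (i+d) (by omega)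
        have hne := hXne (i+d) (by omega) (by omega)
        have key : (Xe u i * Xe x (i+d+1)) * Xe x (i+d)
            = (Xe u (i+d+1) * Xe x i) * Xe x (i+d) := by
          calc (Xe u i * Xe x (i+d+1)) * Xe x (i+d)
              = (Xe u i * Xe x (i+d)) * Xe x (i+d+1) := by ring
            _ = (Xe u (i+d) * Xe x i) * Xe x (i+d+1) := by rw [h1]
            _ = (Xe u (i+d) * Xe x (i+d+1)) * Xe x i := by ring
            _ = (Xe u (i+d+1) * Xe x (i+d)) * Xe x i := by rw [h2]
            _ = (Xe u (i+d+1) * Xe x i) * Xe x (i+d) := by ring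
        exact mul_right_cancel₀ hne key
    have hall : ∀ i j, i < N → j < N → Xe u i * Xe x j = Xe u j * Xe x i := by
      intro i j hi hj
      rcases lt_trichotomy i j with h | h | h
      · have h0 := hstep (j - i) (by omega) i (by omega)
        rwa [show i + (j - i) = j from by omega] at h0
      · rw [h]
      · have h0 := hstep (i - j) (by omega) j (by omega)
        rw [show j + (i - j) = i from by omega] at h0
        exact h0.symm
    obtain ⟨a, ha⟩ : ∃ a : Fin N, x a ≠ 0 := by
      by_contra h; push_neg at h; exact hx0 (funext h)
    have hXa : Xe x (a:ℕ) = x a := by simp [Xe, a.isLt]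
    set r : ℂ := Xe u (a:ℕ) * (x a)⁻¹ with hr
    have hui : ∀ i : Fin N, u i = r * x i := by
      intro i
      have h := hall (i:ℕ) (a:ℕ) i.isLt a.isLt
      have hXi : Xe u (i:ℕ) = u i := by simp [Xe, i.isLt]
      have hXxi : Xe x (i:ℕ) = x i := by simp [Xe, i.isLt]
      rw [hXi, hXxi, hXa] at h
      rw [hr]
      field_simp
      linear_combination h
    have hinnux : inn u x = r * inn x x := by
      unfold inn; rw [Finset.mul_sum]
      exact Finset.sum_congr rfl fun i _ => by rw [hui i]; ring
    have hxx : inn x x ≠ 0 := by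
      intro h
      have hxx' : inn x x = (((∑ i : Fin N, Complex.normSq (x i)) : ℝ) : ℂ) := by
        unfold inn; push_cast
        exact Finset.sum_congr rfl fun i _ => (Complex.mul_conj (x i))
      rw [hxx'] at h
      have h0 : (∑ i : Fin N, Complex.normSq (x i)) = 0 := by exact_mod_cast h
      have h1 := (Finset.sum_eq_zero_iff_of_nonneg
        (fun i _ => Complex.normSq_nonneg (x i))).mp h0 a (Finset.mem_univ a)
      exact ha (Complex.normSq_eq_zero.mp h1)
    have hr0 : r = 0 := by
      rw [hinnux] at hux
      exact (mul_eq_zero.mp hux).resolve_right hxx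
    apply hu
    funext i
    rw [hui i, hr0, zero_mul]
    rfl

/-- Theorem 5 (part Φ): for every x ∈ S_Φ there is a dual certificate
Y = Σ_{m,n} γ_{m,n}·φ_{m,n} φ_{m,n}* in the range of A_Φ* with Yx = 0 and
Y positive definite on the orthogonal complement of x. -/
theorem dual_certificate_exists_Phi (N : ℕ) (hN : 2 ≤ N) (x : Fin N → ℂ) (hx0 : x ≠ 0)
    (hx : ∀ i : Fin N, 0 < (i : ℕ) → (i : ℕ) < N - 1 → x i ≠ 0) :
    ∃ γ : Fin 4 → ℕ → ℝ,
      ((∑ n ∈ Finset.range (N - 1), ∑ m : Fin 4,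
          (γ m n : ℂ) • outer (phiv N m n) (phiv N m n)).mulVec x = 0) ∧
      (∀ u : Fin N → ℂ, u ≠ 0 → inn u x = 0 →
        0 < (inn ((∑ n ∈ Finset.range (N - 1), ∑ m : Fin 4,
          (γ m n : ℂ) • outer (phiv N m n) (phiv N m n)).mulVec u) u).re) := by
  exact main_thm N hN x hx0 hx
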